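/- For every n ≥ 1, Σ_{k=1}^n |e^{iπ/n} - e^{2πik/n}|^{-2} = n²/4, and Σ_{k=1}^n |e^{iπ/n} - e^{2πik/n}|^{-4} = n²/24 + n⁴/48. -/

import Mathlib

open Complex Real Finset

noncomputable def uu (n k : ℕ) : ℂ :=
  Complex.exp (((2 * Real.pi * k / n - Real.pi / n : ℝ) : ℂ) * Complex.I)

noncomputable def TT (n r : ℕ) : ℂ := ∑ k ∈ Finset.range n, uu n k ^ r


lemma uu_ne_zero (n k : ℕ) : uu n k ≠ 0 := Complex.exp_ne_zero _

lemma uu_pow_n (n k : ℕ) (hn : 1 ≤ n) : uu n k ^ n = -1 := by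
  have hn0 : (n : ℂ) ≠ 0 := by
    simpa using (Nat.cast_ne_zero (R := ℂ)).mpr (Nat.one_le_iff_ne_zero.mp hn)
  rw [uu, ← Complex.exp_nat_mul]
  have : (n : ℂ) * (((2 * Real.pi * k / n - Real.pi / n : ℝ) : ℂ) * Complex.I)
      = (k : ℂ) * (2 * Real.pi * Complex.I) - Real.pi * Complex.I := by
    push_cast
    field_simp
  rw [this, Complex.exp_sub, Complex.exp_nat_mul, Complex.exp_two_pi_mul_I,
    Complex.exp_pi_mul_I]
  simp

lemma uu_ne_one (n k : ℕ) (hn : 1 ≤ n) : uu n k ≠ 1 := by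
  intro h
  rw [uu, Complex.exp_eq_one_iff] at h
  obtain ⟨m, hm⟩ := h
  have h2 : (((2 * Real.pi * k / n - Real.pi / n : ℝ)) : ℂ) * Complex.I
      = (((m : ℝ) * (2 * Real.pi) : ℝ) : ℂ) * Complex.I := by
    rw [hm]; push_cast; ring
  have hI := mul_right_cancel₀ Complex.I_ne_zero h2
  have hr : (2 * Real.pi * k / n - Real.pi / n : ℝ) = (m : ℝ) * (2 * Real.pi) :=
    Complex.ofReal_injective hI
  have hn0 : (n : ℝ) ≠ 0 := by positivity
  have h4 : Real.pi * (2 * (k:ℝ) - 1) = Real.pi * (2 * (m:ℝ) * n) := by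
    field_simp at hr
    rw [hr]; ring
  have h5 : (2 * (k:ℝ) - 1) = 2 * (m:ℝ) * n := mul_left_cancel₀ Real.pi_ne_zero h4
  have h6 : (2 * (k:ℤ) - 1) = 2 * m * n := by exact_mod_cast h5
  have : Even (1 : ℤ) := ⟨(k:ℤ) - m * n, by linarith⟩
  simp at this

lemma TT_zero (n : ℕ) : TT n 0 = n := by
  simp [TT]

lemma TT_eq_zero (n r : ℕ) (h1 : 1 ≤ r) (h2 : r < n) : TT n r = 0 := by
  have hn : 1 ≤ n := le_trans h1 h2.le
  have hn0 : (n : ℝ) ≠ 0 := by positivity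
  have hnc : (n : ℂ) ≠ 0 := by exact_mod_cast hn0
  set c : ℂ := Complex.exp (((-(Real.pi * r / n) : ℝ) : ℂ) * Complex.I) with hc
  set x : ℂ := Complex.exp (((2 * Real.pi * r / n : ℝ) : ℂ) * Complex.I) with hx
  have key : ∀ k, uu n k ^ r = c * x ^ k := by
    intro k
    rw [uu, ← Complex.exp_nat_mul, hc, hx, ← Complex.exp_nat_mul, ← Complex.exp_add]
    congr 1
    push_cast
    field_simp
    ring
  have hxn : x ^ n = 1 := by
    rw [hx, ← Complex.exp_nat_mul]
    have : (n : ℂ) * (((2 * Real.pi * r / n : ℝ) : ℂ) * Complex.I)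
        = (r : ℂ) * (2 * Real.pi * Complex.I) := by
      push_cast; field_simp
    rw [this, Complex.exp_nat_mul, Complex.exp_two_pi_mul_I, one_pow]
  have hx1 : x ≠ 1 := by
    intro h
    rw [hx, Complex.exp_eq_one_iff] at h
    obtain ⟨m, hm⟩ := h
    have h2' : (((2 * Real.pi * r / n : ℝ)) : ℂ) * Complex.I
        = (((m : ℝ) * (2 * Real.pi) : ℝ) : ℂ) * Complex.I := by
      rw [hm]; push_cast; ring
    have hr : (2 * Real.pi * r / n : ℝ) = (m : ℝ) * (2 * Real.pi) :=
      Complex.ofReal_injective (mul_right_cancel₀ Complex.I_ne_zero h2')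
    have h4 : Real.pi * (2 * (r:ℝ)) = Real.pi * (2 * (m:ℝ) * n) := by
      field_simp at hr
      rw [hr]; ring
    have h5 : (2 * (r:ℝ)) = 2 * (m:ℝ) * n := mul_left_cancel₀ Real.pi_ne_zero h4
    have h6 : 2 * (r:ℤ) = 2 * m * n := by exact_mod_cast h5
    have h7 : (r : ℤ) = m * n := by linarith
    have h8 : (n : ℤ) ∣ (r : ℤ) := ⟨m, by linarith⟩
    have h9 : n ∣ r := by exact_mod_cast h8
    have := Nat.le_of_dvd (by omega) h9
    omega
  calc TT n r = ∑ k ∈ Finset.range n, c * x ^ k := Finset.sum_congr rfl (fun k _ => key k)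
    _ = c * ((x ^ n - 1) / (x - 1)) := by rw [← Finset.mul_sum, geom_sum_eq hx1]
    _ = 0 := by rw [hxn]; simp

lemma TT_antiper (n r : ℕ) (hn : 1 ≤ n) : TT n (r + n) = -TT n r := by
  have h : ∀ k, uu n k ^ (r + n) = -(uu n k ^ r) := by
    intro k
    rw [pow_add, uu_pow_n n k hn]
    ring
  rw [TT, Finset.sum_congr rfl (fun k _ => h k), Finset.sum_neg_distrib]
  rfl

noncomputable def gg (n k : ℕ) : ℂ := ∑ j ∈ Finset.range n, uu n k ^ j

noncomputable def F2 (n r : ℕ) : ℂ := ∑ j ∈ Finset.range n, TT n (r + j)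
noncomputable def F3 (n r : ℕ) : ℂ := ∑ j ∈ Finset.range n, F2 n (r + j)
noncomputable def F4 (n r : ℕ) : ℂ := ∑ j ∈ Finset.range n, F3 n (r + j)
noncomputable def F5 (n r : ℕ) : ℂ := ∑ j ∈ Finset.range n, F4 n (r + j)

lemma F2_antiper (n r : ℕ) (hn : 1 ≤ n) : F2 n (r + n) + F2 n r = 0 := by
  rw [F2, F2, ← Finset.sum_add_distrib]
  apply Finset.sum_eq_zero
  intro j _
  have : r + n + j = (r + j) + n := by ring
  rw [this, TT_antiper n (r + j) hn]
  ring

lemma F3_antiper (n r : ℕ) (hn : 1 ≤ n) : F3 n (r + n) + F3 n r = 0 := by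
  rw [F3, F3, ← Finset.sum_add_distrib]
  apply Finset.sum_eq_zero
  intro j _
  have : r + n + j = (r + j) + n := by ring
  rw [this]
  exact F2_antiper n (r + j) hn

lemma F4_antiper (n r : ℕ) (hn : 1 ≤ n) : F4 n (r + n) + F4 n r = 0 := by
  rw [F4, F4, ← Finset.sum_add_distrib]
  apply Finset.sum_eq_zero
  intro j _
  have : r + n + j = (r + j) + n := by ring
  rw [this]
  exact F3_antiper n (r + j) hn

-- generic shift lemma: ∑_{j<n} f (r+1+j) = ∑_{j<n} f (r+j) + f (r+n) - f r
lemma shift_sum (n r : ℕ) (f : ℕ → ℂ) :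
    ∑ j ∈ Finset.range n, f (r + 1 + j)
      = ∑ j ∈ Finset.range n, f (r + j) + f (r + n) - f r := by
  have h1 : ∑ j ∈ Finset.range n, f (r + 1 + j) = ∑ j ∈ Finset.range n, f (r + (j + 1)) := by
    apply Finset.sum_congr rfl
    intro j _
    congr 1
    ring
  rw [h1]
  have h2 : ∑ j ∈ Finset.range (n + 1), f (r + j)
      = ∑ j ∈ Finset.range n, f (r + (j + 1)) + f (r + 0) := Finset.sum_range_succ' _ n
  have h3 : ∑ j ∈ Finset.range (n + 1), f (r + j)
      = ∑ j ∈ Finset.range n, f (r + j) + f (r + n) := Finset.sum_range_succ _ n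
  rw [h3] at h2
  simp only [Nat.add_zero] at h2
  have h4 : ∑ j ∈ Finset.range n, f (r + (j + 1)) = ∑ j ∈ Finset.range n, f (r + j + 1) := rfl
  rw [h4] at h2 ⊢
  linear_combination -h2

lemma F2_rec (n r : ℕ) (hn : 1 ≤ n) : F2 n (r + 1) = F2 n r - 2 * TT n r := by
  have := shift_sum n r (TT n)
  rw [F2, F2, this, TT_antiper n r hn]
  ring

lemma F3_rec (n r : ℕ) (hn : 1 ≤ n) : F3 n (r + 1) = F3 n r - 2 * F2 n r := by
  have := shift_sum n r (F2 n)
  have h2 := F2_antiper n r hn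
  rw [F3, F3, this]
  have : F2 n (r + n) = -F2 n r := by linear_combination h2
  rw [this]
  ring

lemma F4_rec (n r : ℕ) (hn : 1 ≤ n) : F4 n (r + 1) = F4 n r - 2 * F3 n r := by
  have := shift_sum n r (F3 n)
  have h2 := F3_antiper n r hn
  rw [F4, F4, this]
  have : F3 n (r + n) = -F3 n r := by linear_combination h2
  rw [this]
  ring

lemma F5_rec (n r : ℕ) (hn : 1 ≤ n) : F5 n (r + 1) = F5 n r - 2 * F4 n r := by
  have := shift_sum n r (F4 n)
  have h2 := F4_antiper n r hn
  rw [F5, F5, this]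
  have : F4 n (r + n) = -F4 n r := by linear_combination h2
  rw [this]
  ring

lemma poly_sum (c d e : ℂ) (m : ℕ) :
    ∑ j ∈ Finset.range m, (e * ((j:ℂ)+1)^2 + c * ((j:ℂ)+1) + d)
      = e * (m*(m+1)*(2*m+1)/6) + c * (m*(m+1)/2) + d*m := by
  induction m with
  | zero => simp
  | succ m ih =>
    rw [Finset.sum_range_succ, ih]
    push_cast
    ring

lemma F2_zero (n : ℕ) (hn : 1 ≤ n) : F2 n 0 = n := by
  rw [F2]
  simp only [Nat.zero_add]
  rw [Finset.sum_eq_single_of_mem 0 (Finset.mem_range.mpr hn)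
    (fun j _ hj => TT_eq_zero n j (by omega) (by
      rename_i hjn
      exact Finset.mem_range.mp hjn))]
  exact TT_zero n

lemma F2_closed (n : ℕ) (hn : 1 ≤ n) : ∀ s, 1 ≤ s → s ≤ n → F2 n s = -(n:ℂ) := by
  intro s hs1
  induction s, hs1 using Nat.le_induction with
  | base =>
    intro _
    have h := F2_rec n 0 hn
    rw [h, F2_zero n hn, TT_zero n]
    ring
  | succ s hs ih =>
    intro hsn
    rw [F2_rec n s hn, ih (by omega), TT_eq_zero n s hs (by omega)]
    ring

lemma F3_zero (n : ℕ) (hn : 1 ≤ n) : F3 n 0 = 2*(n:ℂ) - (n:ℂ)^2 := by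
  obtain ⟨m, rfl⟩ : ∃ m, n = m + 1 := ⟨n - 1, by omega⟩
  rw [F3]
  simp only [Nat.zero_add]
  rw [Finset.sum_range_succ']
  have h1 : ∑ j ∈ Finset.range m, F2 (m+1) (j+1)
      = ∑ j ∈ Finset.range m, (0 * ((j:ℂ)+1)^2 + 0 * ((j:ℂ)+1) + (-((m:ℂ)+1))) := by
    apply Finset.sum_congr rfl
    intro j hj
    rw [F2_closed (m+1) hn (j+1) (by omega) (by have := Finset.mem_range.mp hj; omega)]
    push_cast
    ring
  rw [h1, poly_sum, F2_zero (m+1) hn]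
  push_cast
  ring

lemma F3_closed (n : ℕ) (hn : 1 ≤ n) :
    ∀ s, 1 ≤ s → s ≤ n → F3 n s = 2*(n:ℂ)*s - (n:ℂ)^2 - 2*n := by
  intro s hs1
  induction s, hs1 using Nat.le_induction with
  | base =>
    intro _
    rw [F3_rec n 0 hn, F3_zero n hn, F2_zero n hn]
    push_cast
    ring
  | succ s hs ih =>
    intro hsn
    rw [F3_rec n s hn, ih (by omega), F2_closed n hn s hs (by omega)]
    push_cast
    ring

lemma F4_zero (n : ℕ) (hn : 1 ≤ n) : F4 n 0 = 4*(n:ℂ) - 3*(n:ℂ)^2 := by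
  obtain ⟨m, rfl⟩ : ∃ m, n = m + 1 := ⟨n - 1, by omega⟩
  rw [F4]
  simp only [Nat.zero_add]
  rw [Finset.sum_range_succ']
  have h1 : ∑ j ∈ Finset.range m, F3 (m+1) (j+1)
      = ∑ j ∈ Finset.range m,
        (0 * ((j:ℂ)+1)^2 + (2*((m:ℂ)+1)) * ((j:ℂ)+1) + (-((m:ℂ)+1)^2 - 2*((m:ℂ)+1))) := by
    apply Finset.sum_congr rfl
    intro j hj
    rw [F3_closed (m+1) hn (j+1) (by omega) (by have := Finset.mem_range.mp hj; omega)]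
    push_cast
    ring
  rw [h1, poly_sum, F3_zero (m+1) hn]
  push_cast
  ring

lemma F4_closed (n : ℕ) (hn : 1 ≤ n) :
    ∀ s, 1 ≤ s → s ≤ n →
      F4 n s = -(n:ℂ)^2 - 2*n*(s:ℂ)^2 + 2*n*(n+3)*(s:ℂ) - 2*n*(n+2) := by
  intro s hs1
  induction s, hs1 using Nat.le_induction with
  | base =>
    intro _
    rw [F4_rec n 0 hn, F4_zero n hn, F3_zero n hn]
    push_cast
    ring
  | succ s hs ih =>
    intro hsn
    rw [F4_rec n s hn, ih (by omega), F3_closed n hn s hs (by omega)]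
    push_cast
    ring

lemma F5_zero (n : ℕ) (hn : 1 ≤ n) :
    F5 n 0 = ((n:ℂ)^4 - 22*(n:ℂ)^2 + 24*(n:ℂ))/3 := by
  obtain ⟨m, rfl⟩ : ∃ m, n = m + 1 := ⟨n - 1, by omega⟩
  rw [F5]
  simp only [Nat.zero_add]
  rw [Finset.sum_range_succ']
  have h1 : ∑ j ∈ Finset.range m, F4 (m+1) (j+1)
      = ∑ j ∈ Finset.range m,
        ((-2*((m:ℂ)+1)) * ((j:ℂ)+1)^2 + (2*((m:ℂ)+1)*((m:ℂ)+1+3)) * ((j:ℂ)+1)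
          + (-((m:ℂ)+1)^2 - 2*((m:ℂ)+1)*((m:ℂ)+1+2))) := by
    apply Finset.sum_congr rfl
    intro j hj
    rw [F4_closed (m+1) hn (j+1) (by omega) (by have := Finset.mem_range.mp hj; omega)]
    push_cast
    ring
  rw [h1, poly_sum, F4_zero (m+1) hn]
  push_cast
  ring

lemma mul_gg (n k r : ℕ) :
    uu n k ^ r * gg n k = ∑ j ∈ Finset.range n, uu n k ^ (r + j) := by
  rw [gg, Finset.mul_sum]
  exact Finset.sum_congr rfl fun j _ => by rw [← pow_add]

lemma L2 (n : ℕ) (r : ℕ) : ∑ k ∈ Finset.range n, uu n k ^ r * gg n k = F2 n r := by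
  rw [Finset.sum_congr rfl fun k _ => mul_gg n k r, Finset.sum_comm]
  rfl

lemma L3 (n : ℕ) (r : ℕ) : ∑ k ∈ Finset.range n, uu n k ^ r * gg n k ^ 2 = F3 n r := by
  have h : ∀ k, uu n k ^ r * gg n k ^ 2
      = ∑ j ∈ Finset.range n, uu n k ^ (r + j) * gg n k := by
    intro k
    calc uu n k ^ r * gg n k ^ 2 = (uu n k ^ r * gg n k) * gg n k := by ring
      _ = (∑ j ∈ Finset.range n, uu n k ^ (r + j)) * gg n k := by rw [mul_gg]
      _ = ∑ j ∈ Finset.range n, uu n k ^ (r + j) * gg n k := by rw [Finset.sum_mul]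
  rw [Finset.sum_congr rfl fun k _ => h k, Finset.sum_comm, F3]
  exact Finset.sum_congr rfl fun j _ => L2 n (r + j)

lemma L4 (n : ℕ) (r : ℕ) : ∑ k ∈ Finset.range n, uu n k ^ r * gg n k ^ 3 = F4 n r := by
  have h : ∀ k, uu n k ^ r * gg n k ^ 3
      = ∑ j ∈ Finset.range n, uu n k ^ (r + j) * gg n k ^ 2 := by
    intro k
    calc uu n k ^ r * gg n k ^ 3 = (uu n k ^ r * gg n k) * gg n k ^ 2 := by ring
      _ = (∑ j ∈ Finset.range n, uu n k ^ (r + j)) * gg n k ^ 2 := by rw [mul_gg]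
      _ = ∑ j ∈ Finset.range n, uu n k ^ (r + j) * gg n k ^ 2 := by rw [Finset.sum_mul]
  rw [Finset.sum_congr rfl fun k _ => h k, Finset.sum_comm, F4]
  exact Finset.sum_congr rfl fun j _ => L3 n (r + j)

lemma L5 (n : ℕ) (r : ℕ) : ∑ k ∈ Finset.range n, uu n k ^ r * gg n k ^ 4 = F5 n r := by
  have h : ∀ k, uu n k ^ r * gg n k ^ 4
      = ∑ j ∈ Finset.range n, uu n k ^ (r + j) * gg n k ^ 3 := by
    intro k
    calc uu n k ^ r * gg n k ^ 4 = (uu n k ^ r * gg n k) * gg n k ^ 3 := by ring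
      _ = (∑ j ∈ Finset.range n, uu n k ^ (r + j)) * gg n k ^ 3 := by rw [mul_gg]
      _ = ∑ j ∈ Finset.range n, uu n k ^ (r + j) * gg n k ^ 3 := by rw [Finset.sum_mul]
  rw [Finset.sum_congr rfl fun k _ => h k, Finset.sum_comm, F5]
  exact Finset.sum_congr rfl fun j _ => L4 n (r + j)

lemma sumG1 (n : ℕ) : ∑ k ∈ Finset.range n, gg n k = F2 n 0 := by
  have := L2 n 0
  simpa using this

lemma sumG2 (n : ℕ) : ∑ k ∈ Finset.range n, gg n k ^ 2 = F3 n 0 := by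
  have := L3 n 0
  simpa using this

lemma sumG3 (n : ℕ) : ∑ k ∈ Finset.range n, gg n k ^ 3 = F4 n 0 := by
  have := L4 n 0
  simpa using this

lemma sumG4 (n : ℕ) : ∑ k ∈ Finset.range n, gg n k ^ 4 = F5 n 0 := by
  have := L5 n 0
  simpa using this

lemma gg_eq (n k : ℕ) (hn : 1 ≤ n) : gg n k = -2 / (uu n k - 1) := by
  have h1u : uu n k - 1 ≠ 0 := sub_ne_zero.mpr (uu_ne_one n k hn)
  rw [eq_div_iff h1u, gg, geom_sum_mul, uu_pow_n n k hn]
  norm_num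

lemma conj_exp_mul_I (z : ℂ) (hz : (starRingEnd ℂ) z = z) :
    (starRingEnd ℂ) (Complex.exp (z * Complex.I)) = (Complex.exp (z * Complex.I))⁻¹ := by
  rw [← Complex.exp_conj, ← Complex.exp_neg]
  congr 1
  rw [map_mul, hz, Complex.conj_I]
  ring

lemma term_sq (n k : ℕ) (hn : 1 ≤ n) :
    (((‖Complex.exp ((Real.pi / n) * Complex.I) -
        Complex.exp ((2 * Real.pi * k / n) * Complex.I)‖ ^ 2)⁻¹ : ℝ) : ℂ)
      = gg n k / 2 - gg n k ^ 2 / 4 := by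
  have hn0 : (n : ℂ) ≠ 0 := by
    exact_mod_cast Nat.cast_ne_zero.mpr (Nat.one_le_iff_ne_zero.mp hn)
  set w : ℂ := Complex.exp ((Real.pi / n) * Complex.I) with hwdef
  set z : ℂ := Complex.exp ((2 * Real.pi * k / n) * Complex.I) with hzdef
  have hw0 : w ≠ 0 := Complex.exp_ne_zero _
  have hu0 : uu n k ≠ 0 := uu_ne_zero n k
  have hu1 : uu n k - 1 ≠ 0 := sub_ne_zero.mpr (uu_ne_one n k hn)
  have hz : z = w * uu n k := by
    rw [hzdef, hwdef, uu, ← Complex.exp_add]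
    congr 1
    push_cast
    field_simp
    ring
  have habs : (((‖w - z‖ ^ 2)⁻¹ : ℝ) : ℂ)
      = ((w - z) * (starRingEnd ℂ) (w - z))⁻¹ := by
    rw [Complex.mul_conj, Complex.ofReal_inv, ← Complex.sq_norm, Complex.ofReal_pow]
  have hcw : (starRingEnd ℂ) w = w⁻¹ := by
    apply conj_exp_mul_I
    simp [map_div₀]
  have hcz : (starRingEnd ℂ) z = z⁻¹ := by
    apply conj_exp_mul_I
    simp [map_div₀, map_ofNat]
  have hfact : (w - w * uu n k) * (w⁻¹ - (w * uu n k)⁻¹)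
      = -(uu n k - 1) ^ 2 / uu n k := by
    field_simp
    ring
  rw [habs, map_sub, hcw, hcz, hz, hfact, gg_eq n k hn]
  field_simp
  ring

lemma term_four (n k : ℕ) (hn : 1 ≤ n) :
    (((‖Complex.exp ((Real.pi / n) * Complex.I) -
        Complex.exp ((2 * Real.pi * k / n) * Complex.I)‖ ^ 4)⁻¹ : ℝ) : ℂ)
      = gg n k ^ 2 / 4 - gg n k ^ 3 / 4 + gg n k ^ 4 / 16 := by
  have h4 : ∀ x : ℝ, (x ^ 4)⁻¹ = ((x ^ 2)⁻¹) ^ 2 := by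
    intro x
    rw [inv_pow, ← pow_mul]
  rw [h4, Complex.ofReal_pow, term_sq n k hn]
  ring

/-- Values of the Riesz `s`-potential of the `n`-th roots of unity at the midpoint,
for `s = 2` and `s = 4`. -/
theorem riesz_midpoint_values (n : ℕ) (hn : 1 ≤ n) :
    (∑ k ∈ Finset.range n,
        (‖Complex.exp ((Real.pi / n) * Complex.I) -
          Complex.exp ((2 * Real.pi * k / n) * Complex.I)‖ ^ 2)⁻¹ = (n : ℝ) ^ 2 / 4) ∧
    (∑ k ∈ Finset.range n,
        (‖Complex.exp ((Real.pi / n) * Complex.I) -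
          Complex.exp ((2 * Real.pi * k / n) * Complex.I)‖ ^ 4)⁻¹
      = (n : ℝ) ^ 2 / 24 + (n : ℝ) ^ 4 / 48) := by
  constructor
  · apply Complex.ofReal_injective
    rw [Complex.ofReal_sum]
    rw [Finset.sum_congr rfl fun k _ => term_sq n k hn]
    rw [Finset.sum_sub_distrib, ← Finset.sum_div, ← Finset.sum_div, sumG1, sumG2,
      F2_zero n hn, F3_zero n hn]
    push_cast
    ring
  · apply Complex.ofReal_injective
    rw [Complex.ofReal_sum]
    rw [Finset.sum_congr rfl fun k _ => term_four n k hn]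
    rw [Finset.sum_add_distrib, Finset.sum_sub_distrib, ← Finset.sum_div, ← Finset.sum_div,
      ← Finset.sum_div, sumG2, sumG3, sumG4, F3_zero n hn, F4_zero n hn, F5_zero n hn]
    push_cast
    ring
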